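/- Let X ⊆ ℝⁿ be compact and nonempty, f_ℓ : X → ℝ continuous for ℓ = 1,…,r, u* ∈ ℝʳ a utopian vector (u*_ℓ < f_ℓ(x) for all x ∈ X, all ℓ). If x̄ ∈ X is a weak Pareto optimal solution of min_{x∈X} (f₁(x),…,f_r(x)), then there exists w ∈ ℝʳ with w_ℓ > 0 for all ℓ and ∑ w_ℓ = 1 such that x̄ minimizes Ψ_w(x) = max_ℓ w_ℓ(f_ℓ(x) − u*_ℓ) over X. In particular one may take w_ℓ = (f_ℓ(x̄) − u*_ℓ)⁻¹ / ∑_j (f_j(x̄) − u*_j)⁻¹. -/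
import Mathlib


/-- Every weak Pareto optimal solution minimizes some weighted Chebyshev
scalarization with strictly positive weights summing to 1; one may take
`w ℓ = (f ℓ x̄ - u ℓ)⁻¹ / ∑ⱼ (f j x̄ - u j)⁻¹`. -/
theorem weak_pareto_chebyshev (n r : ℕ) (hr : 0 < r) (X : Set (Fin n → ℝ))
    (hXc : IsCompact X) (hX : X.Nonempty)
    (f : Fin r → (Fin n → ℝ) → ℝ) (hf : ∀ ℓ, ContinuousOn (f ℓ) X)
    (u : Fin r → ℝ) (hu : ∀ ℓ, ∀ x ∈ X, u ℓ < f ℓ x)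
    (xbar : Fin n → ℝ) (hxbar : xbar ∈ X)
    (hwp : ¬ ∃ x ∈ X, ∀ ℓ, f ℓ x < f ℓ xbar) :
    ∃ w : Fin r → ℝ, (∀ ℓ, 0 < w ℓ) ∧ (∑ ℓ, w ℓ = 1) ∧
      (∀ x ∈ X, (⨆ ℓ, w ℓ * (f ℓ xbar - u ℓ)) ≤ ⨆ ℓ, w ℓ * (f ℓ x - u ℓ)) ∧
      w = fun ℓ => (f ℓ xbar - u ℓ)⁻¹ / ∑ j, (f j xbar - u j)⁻¹ := by
  haveI : Nonempty (Fin r) := Fin.pos_iff_nonempty.mp hr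
  set S := ∑ j, (f j xbar - u j)⁻¹ with hS
  have hpos : ∀ ℓ, 0 < (f ℓ xbar - u ℓ)⁻¹ := fun ℓ =>
    inv_pos.mpr (sub_pos.mpr (hu ℓ xbar hxbar))
  have hSpos : 0 < S := Finset.sum_pos (fun ℓ _ => hpos ℓ) Finset.univ_nonempty
  refine ⟨fun ℓ => (f ℓ xbar - u ℓ)⁻¹ / S, fun ℓ => div_pos (hpos ℓ) hSpos, ?_, ?_, rfl⟩
  · rw [← Finset.sum_div]; exact div_self hSpos.ne'
  · intro x hx
    have hval : ∀ ℓ, (f ℓ xbar - u ℓ)⁻¹ / S * (f ℓ xbar - u ℓ) = S⁻¹ := by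
      intro ℓ
      have h1 : f ℓ xbar - u ℓ ≠ 0 := (sub_pos.mpr (hu ℓ xbar hxbar)).ne'
      field_simp
    push_neg at hwp
    obtain ⟨ℓ, hℓ⟩ := hwp x hx
    have hleft : (⨆ ℓ, (f ℓ xbar - u ℓ)⁻¹ / S * (f ℓ xbar - u ℓ)) = S⁻¹ := by
      simp only [hval, ciSup_const]
    rw [hleft]
    calc S⁻¹ = (f ℓ xbar - u ℓ)⁻¹ / S * (f ℓ xbar - u ℓ) := (hval ℓ).symm
      _ ≤ (f ℓ xbar - u ℓ)⁻¹ / S * (f ℓ x - u ℓ) := by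
          apply mul_le_mul_of_nonneg_left (by linarith) (div_pos (hpos ℓ) hSpos).le
      _ ≤ ⨆ ℓ, (f ℓ xbar - u ℓ)⁻¹ / S * (f ℓ x - u ℓ) :=
          le_ciSup (Set.Finite.bddAbove (Set.finite_range fun ℓ => (f ℓ xbar - u ℓ)⁻¹ / S * (f ℓ x - u ℓ))) ℓ
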